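/- Let γ : ℝ² ∖ {(−1,0),(1,0)} → ℝ² be the planar dipole field γ(r) = −(r₁ − r)/‖r₁ − r‖³ + (r₂ − r)/‖r₂ − r‖³ with r₁ = (−1,0), r₂ = (1,0). Then γ(r) ≠ 0 for every r in the domain, i.e. the dipole field never vanishes. -/

import Mathlib

/-- Position of the body of mass `-1`. -/
noncomputable def rNeg : EuclideanSpace ℝ (Fin 2) := !₂[-1, 0]

/-- Position of the body of mass `1`. -/
noncomputable def rPos : EuclideanSpace ℝ (Fin 2) := !₂[1, 0]

/-- The planar field generated by the dipole with masses `-1` at `(-1,0)` and `1` at `(1,0)`: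
`γ(r) = -(r₁ - r)/‖r₁ - r‖³ + (r₂ - r)/‖r₂ - r‖³`. -/
noncomputable def dipoleField (r : EuclideanSpace ℝ (Fin 2)) : EuclideanSpace ℝ (Fin 2) :=
  -((1 / ‖rNeg - r‖ ^ 3) • (rNeg - r)) + (1 / ‖rPos - r‖ ^ 3) • (rPos - r)

lemma rNeg_ne_rPos : rNeg ≠ rPos := by
  intro h
  have := congrArg (fun x => x 0) h
  simp [rNeg, rPos] at this
  norm_num at this

/-- The dipole field never vanishes on its domain. -/
theorem dipole_field_ne_zero
    (r : EuclideanSpace ℝ (Fin 2)) (hr₁ : r ≠ rNeg) (hr₂ : r ≠ rPos) :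
    dipoleField r ≠ 0 := by
  intro h
  set u := rNeg - r with hu
  set v := rPos - r with hv
  have hu0 : u ≠ 0 := sub_ne_zero.mpr hr₁.symm
  have hv0 : v ≠ 0 := sub_ne_zero.mpr hr₂.symm
  have ha : (0:ℝ) < ‖u‖ := norm_pos_iff.mpr hu0
  have hb : (0:ℝ) < ‖v‖ := norm_pos_iff.mpr hv0
  rw [dipoleField] at h
  have heq : (1 / ‖v‖ ^ 3) • v = (1 / ‖u‖ ^ 3) • u := by
    rw [neg_add_eq_zero] at h
    exact h.symm
  have hnorm : (1 / ‖v‖ ^ 3) * ‖v‖ = (1 / ‖u‖ ^ 3) * ‖u‖ := by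
    have := congrArg norm heq
    rwa [norm_smul, norm_smul, Real.norm_eq_abs, Real.norm_eq_abs,
      abs_of_pos (by positivity), abs_of_pos (by positivity)] at this
  have hab : ‖u‖ = ‖v‖ := by
    have h2 : ‖u‖ ^ 2 = ‖v‖ ^ 2 := by
      field_simp at hnorm
      exact hnorm
    nlinarith [ha.le, hb.le]
  have huv : u = v := by
    have hc : (1 / ‖v‖ ^ 3) ≠ 0 := by positivity
    rw [hab] at heq
    exact (smul_right_injective _ hc heq).symm
  have h3 : rNeg - r = rPos - r := huv
  exact rNeg_ne_rPos (by simpa using congrArg (· + r) h3)
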